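/- Let p ≥ 3 be prime, and let a, θ ∈ ℚ_p satisfy |a|_p < 1 and |θ − 1|_p ≤ 1/p. Then the quadratic polynomial Q(x) = 2x² + ((1 − θ)(1 − a) + 1 − 2a)x − a has two roots ĥ⁽¹⁾, ĥ⁽²⁾ in ℚ_p with |ĥ⁽¹⁾|_p = |a|_p and |ĥ⁽²⁾|_p = 1 (in particular the two roots are distinct). -/

import Mathlib

/-- For a prime `p ≥ 3` and `a, θ ∈ ℚ_p` with `|a|_p < 1` and
`|θ - 1|_p ≤ 1/p`, the quadratic `Q(x) = 2x² + ((1-θ)(1-a) + 1 - 2a)x - a`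
has two roots `ĥ⁽¹⁾, ĥ⁽²⁾ ∈ ℚ_p` with `|ĥ⁽¹⁾|_p = |a|_p` and `|ĥ⁽²⁾|_p = 1`
(in particular the roots are distinct). -/
theorem potts_quadratic_two_roots (p : ℕ) [Fact p.Prime] (hp : 3 ≤ p)
    (a θ : ℚ_[p]) (ha : ‖a‖ < 1) (hθ : ‖θ - 1‖ ≤ 1 / (p : ℝ)) :
    ∃ h1 h2 : ℚ_[p],
      2 * h1 ^ 2 + ((1 - θ) * (1 - a) + 1 - 2 * a) * h1 - a = 0 ∧
      2 * h2 ^ 2 + ((1 - θ) * (1 - a) + 1 - 2 * a) * h2 - a = 0 ∧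
      ‖h1‖ = ‖a‖ ∧ ‖h2‖ = 1 ∧ h1 ≠ h2 := by
  set b : ℚ_[p] := (1 - θ) * (1 - a) + 1 - 2 * a with hbdef
  have hp2 : ¬ ((p : ℤ) ∣ 2) := by
    intro h
    have := Int.le_of_dvd (by norm_num) h
    omega
  have h2norm : ‖(2 : ℚ_[p])‖ = 1 := by
    refine le_antisymm ?_ ?_
    · simpa using Padic.norm_int_le_one (p := p) 2
    · by_contra hlt
      push_neg at hlt
      have : ‖((2 : ℤ) : ℚ_[p])‖ < 1 := by simpa using hlt
      exact hp2 ((Padic.norm_intCast_lt_one_iff).mp this)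
  have hpinv : (1 : ℝ) / p < 1 := by
    have : (1:ℝ) < p := by exact_mod_cast (by omega : 1 < p)
    rw [div_lt_one (by linarith)]; linarith
  have hb1 : ‖b - 1‖ < 1 := by
    have heq : b - 1 = (1 - θ) * (1 - a) + (-(2 * a)) := by rw [hbdef]; ring
    rw [heq]
    refine lt_of_le_of_lt (Padic.nonarchimedean _ _) (max_lt ?_ ?_)
    · rw [norm_mul]
      have h1θ : ‖1 - θ‖ ≤ 1 / p := by rwa [norm_sub_rev] at hθ
      have h1a : ‖1 - a‖ ≤ 1 := by
        have h := Padic.nonarchimedean (1 : ℚ_[p]) (-a)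
        rw [show (1:ℚ_[p]) + -a = 1 - a by ring] at h
        refine h.trans ?_
        simp [ha.le]
      calc ‖1 - θ‖ * ‖1 - a‖ ≤ (1/p) * 1 :=
            mul_le_mul h1θ h1a (norm_nonneg _) (by positivity)
        _ < 1 := by simpa using hpinv
    · rw [norm_neg, norm_mul, h2norm, one_mul]; exact ha
  have hb : ‖b‖ = 1 := by
    have h := Padic.add_eq_max_of_ne (q := b - 1) (r := 1)
      (by rw [norm_one]; exact hb1.ne)
    rw [sub_add_cancel] at h
    rw [h, norm_one, max_eq_right hb1.le]
  set a' : ℤ_[p] := ⟨a, ha.le⟩ with ha'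
  set b' : ℤ_[p] := ⟨b, hb.le⟩ with hb'
  set F : Polynomial ℤ_[p] := 2 * Polynomial.X ^ 2 + Polynomial.C b' * Polynomial.X - Polynomial.C a' with hF
  have hF0 : F.eval 0 = -a' := by simp [hF]
  have hFd : F.derivative.eval 0 = b' := by
    simp [hF]
  have hna' : ‖(-a' : ℤ_[p])‖ = ‖a‖ := by rw [norm_neg]; exact rfl
  have hnb' : ‖b'‖ = 1 := by rw [PadicInt.norm_def]; exact hb
  have hcond : ‖F.eval 0‖ < ‖F.derivative.eval 0‖ ^ 2 := by
    rw [hF0, hFd, hna', hnb']; simpa using ha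
  obtain ⟨z, hz0, hzlt, -, -⟩ := hensels_lemma hcond
  rw [Polynomial.coe_aeval_eq_eval, hFd, hnb', sub_zero] at hzlt
  have hev : F.eval z = 2 * z ^ 2 + b' * z - a' := by simp [hF]
  have hcast : ((2 * z ^ 2 + b' * z - a' : ℤ_[p]) : ℚ_[p]) = 0 := by
    rw [← hev, ← Polynomial.coe_aeval_eq_eval, hz0]; simp
  push_cast at hcast
  rw [show ((2 : ℤ_[p]) : ℚ_[p]) = 2 from rfl] at hcast
  set h1 : ℚ_[p] := (z : ℚ_[p]) with hh1
  have hzq : 2 * h1 ^ 2 + b * h1 - a = 0 := by linear_combination hcast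
  have hz1 : ‖h1‖ < 1 := by rwa [hh1, ← PadicInt.norm_def]
  have h2h1b : ‖2 * h1 + b‖ = 1 := by
    have hlt : ‖2 * h1‖ < ‖b‖ := by
      rw [norm_mul, h2norm, one_mul, hb]; exact hz1
    rw [Padic.add_eq_max_of_ne hlt.ne, max_eq_right hlt.le, hb]
  have hnormh1 : ‖h1‖ = ‖a‖ := by
    have hfac : a = h1 * (2 * h1 + b) := by linear_combination -hzq
    rw [hfac, norm_mul, h2h1b, mul_one]
  have hnormh2 : ‖-b/2 - h1‖ = 1 := by
    have heq : -b/2 - h1 = -(h1 + b/2) := by ring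
    have hlt : ‖h1‖ < ‖b/2‖ := by rw [norm_div, hb, h2norm]; simpa using hz1
    rw [heq, norm_neg, Padic.add_eq_max_of_ne hlt.ne, max_eq_right hlt.le,
      norm_div, hb, h2norm]
    norm_num
  refine ⟨h1, -b/2 - h1, hzq, by linear_combination hzq, hnormh1, hnormh2, ?_⟩
  intro hc
  rw [hc, hnormh2] at hnormh1
  rw [← hnormh1] at ha
  exact lt_irrefl 1 ha
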